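/- Let F be a field, d ≥ 1, and let ι be the automorphism of GL_d(F) given by ι(g) = (gᵀ)⁻¹ (inverse-transpose); ι has order dividing 2, so one can form the semidirect product G = GL_d(F) ⋊ Z/2Z in which the nontrivial element of Z/2Z acts by ι. Suppose x, y ∈ GL_d(F) with y symmetric (yᵀ = y) and y⁻¹xy = xᵀ. Then the element σ = (y, 1) of G satisfies σ ≠ 1, σ² = 1, and σ⁻¹(x,0)σ = (x⁻¹, 0). Consequently, if x has finite order m ≥ 3, the subgroup of G generated by (x,0) and σ is isomorphic to the dihedral group of order 2m. -/
import Mathlib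

theorem dihedral_aux {G : Type*} [Group G] (a σ : G) (m : ℕ) (hm : 3 ≤ m)
    (ha : orderOf a = m) (hσ2 : σ ^ 2 = 1)
    (hconj : σ * a * σ = a⁻¹) (hσz : σ ∉ Subgroup.zpowers a) :
    Nonempty (↥(Subgroup.closure {a, σ}) ≃* DihedralGroup m) := by
  haveI : NeZero m := ⟨by omega⟩
  haveI : Fact (1 < m) := ⟨by omega⟩
  have hσσ : σ * σ = 1 := by rw [← sq]; exact hσ2
  have hσinv : σ⁻¹ = σ := inv_eq_of_mul_eq_one_right hσσ
  have hpadd : ∀ i j : ZMod m, a ^ (i + j).val = a ^ i.val * a ^ j.val := by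
    intro i j
    rw [← pow_add]
    apply pow_eq_pow_iff_modEq.mpr
    rw [ha]
    show (i + j).val % m = (i.val + j.val) % m
    rw [ZMod.val_add, Nat.mod_mod_of_dvd _ dvd_rfl]
  have hsub : ∀ i j : ZMod m, a ^ (j - i).val = (a ^ i.val)⁻¹ * a ^ j.val := by
    intro i j
    have h := hpadd i (j - i)
    rw [add_sub_cancel] at h
    rw [eq_inv_mul_iff_mul_eq, ← h]
  have hconj_pow : ∀ k : ℕ, σ * a ^ k * σ = (a ^ k)⁻¹ := by
    intro k
    calc σ * a ^ k * σ = σ * a ^ k * σ⁻¹ := by rw [hσinv]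
      _ = (σ * a * σ⁻¹) ^ k := (conj_pow).symm
      _ = (a ^ k)⁻¹ := by rw [hσinv, hconj, inv_pow]
  have hswap : ∀ k : ℕ, a ^ k * σ = σ * (a ^ k)⁻¹ := by
    intro k
    rw [← hconj_pow k]
    calc a ^ k * σ = (σ * σ) * (a ^ k * σ) := by rw [hσσ, one_mul]
      _ = σ * (σ * a ^ k * σ) := by group
  let f : DihedralGroup m → G := fun g =>
    match g with
    | .r i => a ^ i.val
    | .sr i => σ * a ^ i.val
  have hmul : ∀ g h, f (g * h) = f g * f h := by
    rintro (i | i) (j | j)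
    · show a ^ (i + j).val = a ^ i.val * a ^ j.val
      exact hpadd i j
    · show σ * a ^ (j - i).val = a ^ i.val * (σ * a ^ j.val)
      rw [hsub i j]
      conv_rhs => rw [← mul_assoc, hswap]
      rw [mul_assoc]
    · show σ * a ^ (i + j).val = σ * a ^ i.val * a ^ j.val
      rw [hpadd i j, mul_assoc]
    · show a ^ (j - i).val = σ * a ^ i.val * (σ * a ^ j.val)
      rw [hsub i j]
      symm
      calc σ * a ^ i.val * (σ * a ^ j.val)
          = σ * (a ^ i.val * σ) * a ^ j.val := by group
        _ = σ * (σ * (a ^ i.val)⁻¹) * a ^ j.val := by rw [hswap]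
        _ = (σ * σ) * ((a ^ i.val)⁻¹ * a ^ j.val) := by group
        _ = (a ^ i.val)⁻¹ * a ^ j.val := by rw [hσσ, one_mul]
  let F : DihedralGroup m →* G := MonoidHom.mk' f hmul
  have hinj : Function.Injective F := by
    apply (injective_iff_map_eq_one F).mpr
    rintro (i | i) hg
    · have h1 : a ^ i.val = 1 := hg
      have hdvd : orderOf a ∣ i.val := orderOf_dvd_of_pow_eq_one h1
      rw [ha] at hdvd
      have hv : i.val = 0 := Nat.eq_zero_of_dvd_of_lt hdvd (ZMod.val_lt i)
      have hi : i = 0 := (ZMod.val_eq_zero i).mp hv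
      rw [hi]
      exact DihedralGroup.one_def.symm
    · exfalso
      have h1 : σ * a ^ i.val = 1 := hg
      apply hσz
      have h2 : σ = (a ^ i.val)⁻¹ := eq_inv_of_mul_eq_one_left h1
      rw [h2]
      exact Subgroup.inv_mem _ (Subgroup.npow_mem_zpowers a i.val)
  have haR : a ∈ F.range := by
    refine ⟨DihedralGroup.r 1, ?_⟩
    show a ^ (1 : ZMod m).val = a
    rw [ZMod.val_one, pow_one]
  have hσR : σ ∈ F.range := by
    refine ⟨DihedralGroup.sr 0, ?_⟩
    show σ * a ^ (0 : ZMod m).val = σ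
    rw [ZMod.val_zero, pow_zero, mul_one]
  have hrange : F.range = Subgroup.closure {a, σ} := by
    have haC : a ∈ Subgroup.closure {a, σ} := Subgroup.subset_closure (Set.mem_insert _ _)
    have hσC : σ ∈ Subgroup.closure {a, σ} :=
      Subgroup.subset_closure (Set.mem_insert_of_mem _ rfl)
    apply le_antisymm
    · rintro _ ⟨(i | i), rfl⟩
      · exact pow_mem haC _
      · exact mul_mem hσC (pow_mem haC _)
    · rw [Subgroup.closure_le]
      rintro z (rfl | rfl)
      · exact haR
      · exact hσR
  exact ⟨(MulEquiv.subgroupCongr hrange.symm).trans (MonoidHom.ofInjective hinj).symm⟩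


open scoped Matrix

theorem singer_and_inverse_transpose_generate_dihedral
    (F : Type*) [Field F] (d : ℕ) (hd : 1 ≤ d)
    (φ : Multiplicative (ZMod 2) →* MulAut (Matrix.GeneralLinearGroup (Fin d) F))
    (hφ : ∀ g : Matrix.GeneralLinearGroup (Fin d) F,
      ((φ (Multiplicative.ofAdd 1) g : Matrix.GeneralLinearGroup (Fin d) F) :
          Matrix (Fin d) (Fin d) F) =
        ((g⁻¹ : Matrix.GeneralLinearGroup (Fin d) F) : Matrix (Fin d) (Fin d) F)ᵀ)
    (x y : Matrix.GeneralLinearGroup (Fin d) F)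
    (hy : ((y : Matrix (Fin d) (Fin d) F))ᵀ = (y : Matrix (Fin d) (Fin d) F))
    (hxy : ((y⁻¹ * x * y : Matrix.GeneralLinearGroup (Fin d) F) :
        Matrix (Fin d) (Fin d) F) = ((x : Matrix (Fin d) (Fin d) F))ᵀ) :
    (⟨y, Multiplicative.ofAdd 1⟩ :
        Matrix.GeneralLinearGroup (Fin d) F ⋊[φ] Multiplicative (ZMod 2)) ≠ 1 ∧
    (⟨y, Multiplicative.ofAdd 1⟩ :
        Matrix.GeneralLinearGroup (Fin d) F ⋊[φ] Multiplicative (ZMod 2)) ^ 2 = 1 ∧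
    (⟨y, Multiplicative.ofAdd 1⟩ :
          Matrix.GeneralLinearGroup (Fin d) F ⋊[φ] Multiplicative (ZMod 2))⁻¹ *
        ⟨x, Multiplicative.ofAdd 0⟩ *
        ⟨y, Multiplicative.ofAdd 1⟩ = ⟨x⁻¹, Multiplicative.ofAdd 0⟩ ∧
    (∀ m : ℕ, orderOf x = m → 3 ≤ m →
      Nonempty
        (↥(Subgroup.closure
            {(⟨x, Multiplicative.ofAdd 0⟩ :
                Matrix.GeneralLinearGroup (Fin d) F ⋊[φ] Multiplicative (ZMod 2)),
             ⟨y, Multiplicative.ofAdd 1⟩}) ≃* DihedralGroup m)) := by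
  rw [Units.val_mul, Units.val_mul] at hxy
  have hyinvT : (((y⁻¹ : Matrix.GeneralLinearGroup (Fin d) F) : Matrix (Fin d) (Fin d) F))ᵀ
      = ((y⁻¹ : Matrix.GeneralLinearGroup (Fin d) F) : Matrix (Fin d) (Fin d) F) := by
    have hb : (((y⁻¹ : Matrix.GeneralLinearGroup (Fin d) F) : Matrix (Fin d) (Fin d) F))ᵀ *
        ((y : Matrix.GeneralLinearGroup (Fin d) F) : Matrix (Fin d) (Fin d) F) = 1 := by
      conv_lhs => rw [← hy]
      rw [← Matrix.transpose_mul, ← Units.val_mul, mul_inv_cancel, Units.val_one,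
        Matrix.transpose_one]
    have hc : ((y : Matrix.GeneralLinearGroup (Fin d) F) : Matrix (Fin d) (Fin d) F) *
        ((y⁻¹ : Matrix.GeneralLinearGroup (Fin d) F) : Matrix (Fin d) (Fin d) F) = 1 := by
      rw [← Units.val_mul, mul_inv_cancel, Units.val_one]
    exact left_inv_eq_right_inv hb hc
  have hφy : φ (Multiplicative.ofAdd 1) y = y⁻¹ := by
    apply Units.ext
    rw [hφ y]
    exact hyinvT
  have hφx : φ (Multiplicative.ofAdd 1) x = y⁻¹ * x⁻¹ * y := by
    apply Units.ext
    rw [hφ x, Units.val_mul, Units.val_mul]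
    have hb : (((x⁻¹ : Matrix.GeneralLinearGroup (Fin d) F) : Matrix (Fin d) (Fin d) F))ᵀ *
        (((x : Matrix.GeneralLinearGroup (Fin d) F) : Matrix (Fin d) (Fin d) F))ᵀ = 1 := by
      rw [← Matrix.transpose_mul, ← Units.val_mul, mul_inv_cancel, Units.val_one,
        Matrix.transpose_one]
    have hc : (((x : Matrix.GeneralLinearGroup (Fin d) F) : Matrix (Fin d) (Fin d) F))ᵀ *
        (((y⁻¹ : Matrix.GeneralLinearGroup (Fin d) F) : Matrix (Fin d) (Fin d) F) *
          ((x⁻¹ : Matrix.GeneralLinearGroup (Fin d) F) : Matrix (Fin d) (Fin d) F) *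
          ((y : Matrix.GeneralLinearGroup (Fin d) F) : Matrix (Fin d) (Fin d) F)) = 1 := by
      rw [← hxy]
      rw [← Units.val_mul, ← Units.val_mul, ← Units.val_mul, ← Units.val_mul, ← Units.val_mul]
      rw [show (y⁻¹ * x * y) * (y⁻¹ * x⁻¹ * y) = (1 : Matrix.GeneralLinearGroup (Fin d) F)
        from by group, Units.val_one]
    exact left_inv_eq_right_inv hb hc
  have hq10 : Multiplicative.ofAdd (1 : ZMod 2) * Multiplicative.ofAdd 0
      = Multiplicative.ofAdd 1 := by decide
  have hσ2 : (⟨y, Multiplicative.ofAdd 1⟩ :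
      Matrix.GeneralLinearGroup (Fin d) F ⋊[φ] Multiplicative (ZMod 2)) ^ 2 = 1 := by
    rw [sq]
    refine SemidirectProduct.ext ?_ ?_
    · show y * φ (Multiplicative.ofAdd 1) y = 1
      rw [hφy, mul_inv_cancel]
    · show Multiplicative.ofAdd (1 : ZMod 2) * Multiplicative.ofAdd 1 = 1
      decide
  have hσinv : (⟨y, Multiplicative.ofAdd 1⟩ :
        Matrix.GeneralLinearGroup (Fin d) F ⋊[φ] Multiplicative (ZMod 2))⁻¹ =
      ⟨y, Multiplicative.ofAdd 1⟩ :=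
    inv_eq_of_mul_eq_one_right (by rw [← sq]; exact hσ2)
  have hσne : (⟨y, Multiplicative.ofAdd 1⟩ :
      Matrix.GeneralLinearGroup (Fin d) F ⋊[φ] Multiplicative (ZMod 2)) ≠ 1 := by
    intro h
    have h2 := congrArg SemidirectProduct.right h
    have h3 : Multiplicative.ofAdd (1 : ZMod 2) = 1 := h2
    exact absurd h3 (by decide)
  have hconj : (⟨y, Multiplicative.ofAdd 1⟩ :
          Matrix.GeneralLinearGroup (Fin d) F ⋊[φ] Multiplicative (ZMod 2))⁻¹ *
        ⟨x, Multiplicative.ofAdd 0⟩ *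
        ⟨y, Multiplicative.ofAdd 1⟩ = ⟨x⁻¹, Multiplicative.ofAdd 0⟩ := by
    rw [hσinv]
    refine SemidirectProduct.ext ?_ ?_
    · show (y * φ (Multiplicative.ofAdd 1) x) *
        φ (Multiplicative.ofAdd 1 * Multiplicative.ofAdd 0) y = x⁻¹
      rw [hq10, hφx, hφy]
      group
    · show Multiplicative.ofAdd (1 : ZMod 2) * Multiplicative.ofAdd 0 *
        Multiplicative.ofAdd 1 = Multiplicative.ofAdd 0
      decide
  refine ⟨hσne, hσ2, hconj, ?_⟩
  intro m hxm hm
  have hainl : (⟨x, Multiplicative.ofAdd 0⟩ :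
      Matrix.GeneralLinearGroup (Fin d) F ⋊[φ] Multiplicative (ZMod 2)) =
      SemidirectProduct.inl x := rfl
  have haord : orderOf (⟨x, Multiplicative.ofAdd 0⟩ :
      Matrix.GeneralLinearGroup (Fin d) F ⋊[φ] Multiplicative (ZMod 2)) = m := by
    rw [hainl, orderOf_injective SemidirectProduct.inl SemidirectProduct.inl_injective, hxm]
  have hainv : (⟨x, Multiplicative.ofAdd 0⟩ :
      Matrix.GeneralLinearGroup (Fin d) F ⋊[φ] Multiplicative (ZMod 2))⁻¹ =
      ⟨x⁻¹, Multiplicative.ofAdd 0⟩ := by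
    rw [hainl, ← map_inv]
    rfl
  have hconj' : (⟨y, Multiplicative.ofAdd 1⟩ :
          Matrix.GeneralLinearGroup (Fin d) F ⋊[φ] Multiplicative (ZMod 2)) *
        ⟨x, Multiplicative.ofAdd 0⟩ * ⟨y, Multiplicative.ofAdd 1⟩ =
      (⟨x, Multiplicative.ofAdd 0⟩ :
        Matrix.GeneralLinearGroup (Fin d) F ⋊[φ] Multiplicative (ZMod 2))⁻¹ := by
    rw [hainv, ← hconj, hσinv]
  have hσz : (⟨y, Multiplicative.ofAdd 1⟩ :
      Matrix.GeneralLinearGroup (Fin d) F ⋊[φ] Multiplicative (ZMod 2)) ∉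
      Subgroup.zpowers (⟨x, Multiplicative.ofAdd 0⟩ :
        Matrix.GeneralLinearGroup (Fin d) F ⋊[φ] Multiplicative (ZMod 2)) := by
    intro hmem
    obtain ⟨k, hk⟩ := Subgroup.mem_zpowers_iff.mp hmem
    have h2 := congrArg SemidirectProduct.rightHom hk
    rw [map_zpow, hainl, SemidirectProduct.rightHom_inl, one_zpow] at h2
    have h3 : (1 : Multiplicative (ZMod 2)) = Multiplicative.ofAdd 1 := h2
    exact absurd h3 (by decide)
  exact dihedral_aux _ _ m hm haord hσ2 hconj' hσz
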